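/- Let f : X → Y be a surjective morphism of normal integral schemes (or more concretely: let A ⊆ B be an extension of integrally closed domains such that Spec B → Spec A is surjective). If D and D' are Cartier divisors on Y such that the pullback f*D' ≤ f*D, then D' ≤ D. -/

import Mathlib

/-- **Krishna–Park lemma** (affine/algebraic form). Let `A ⊆ B` be an extension of
integrally closed (normal) Noetherian domains such that `Spec B → Spec A` is surjective
(the algebraic incarnation of a surjective morphism of normal integral schemes).
Cartier divisors on the affine pieces are principal, given by nonzero elements; the
pullback of the divisor of `a` is the divisor of `f a`, and `D' ≤ D` (i.e. `D - D'`
effective) means `d' ∣ d`. Then `f*D' ≤ f*D` implies `D' ≤ D`. -/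
theorem le_of_pullback_le_of_surjective
    {A B : Type*} [CommRing A] [CommRing B] [IsDomain A] [IsDomain B]
    [IsIntegrallyClosed A] [IsIntegrallyClosed B]
    [IsNoetherianRing A] [IsNoetherianRing B]
    (f : A →+* B) (hinj : Function.Injective f)
    (hsurj : Function.Surjective (PrimeSpectrum.comap f))
    (d d' : A) (hd : d ≠ 0) (hd' : d' ≠ 0)
    (h : f d' ∣ f d) : d' ∣ d := by
  by_contra hnd
  obtain ⟨b, hb⟩ := h
  set I : Ideal A := Ideal.span {d'} with hI
  set M := A ⧸ I
  have hsm : ∀ a x : A, a • (Ideal.Quotient.mk I x : M) = Ideal.Quotient.mk I (a * x) := by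
    intro a x
    rw [← Ideal.Quotient.mk_eq_mk, ← Ideal.Quotient.mk_eq_mk, ← Submodule.Quotient.mk_smul,
      smul_eq_mul]
  have hdbar : (Ideal.Quotient.mk I d : M) ≠ 0 := by
    intro h0
    exact hnd (Ideal.mem_span_singleton.mp (Ideal.Quotient.eq_zero_iff_mem.mp h0))
  set N : Submodule A M := Submodule.span A {Ideal.Quotient.mk I d} with hN
  have hx0 : (⟨Ideal.Quotient.mk I d, Submodule.mem_span_singleton_self _⟩ : N) ≠ 0 := by
    intro h0
    exact hdbar (congrArg Subtype.val h0)
  obtain ⟨P, hPa, -⟩ :=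
    exists_le_isAssociatedPrime_of_isNoetherianRing A _ hx0
  obtain ⟨hPprime, m, hm⟩ := isAssociatedPrime_iff.mp hPa
  obtain ⟨c, hc⟩ := Submodule.mem_span_singleton.mp m.2
  set y := c * d with hy
  have hyP : ∀ a : A, a ∈ P ↔ d' ∣ a * y := by
    intro a
    rw [hm, Submodule.mem_colon_singleton, Submodule.mem_bot]
    have : a • (m : M) = Ideal.Quotient.mk I (a * y) := by
      rw [← hc, smul_smul, hsm, hy, mul_assoc]
    constructor
    · intro h0
      have h1 : a • (m : M) = 0 := congrArg Subtype.val h0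
      rw [this] at h1
      exact Ideal.mem_span_singleton.mp (Ideal.Quotient.eq_zero_iff_mem.mp h1)
    · intro h0
      have h1 : a • (m : M) = 0 := by
        rw [this]
        exact Ideal.Quotient.eq_zero_iff_mem.mpr (Ideal.mem_span_singleton.mpr h0)
      exact Subtype.ext h1
  have hyP' : ¬ d' ∣ y := by
    intro h0
    exact hPprime.ne_top ((Ideal.eq_top_iff_one P).mpr ((hyP 1).mpr (by rwa [one_mul])))
  have hd'P : d' ∈ P := (hyP d').mpr ⟨y, rfl⟩
  by_cases hcase : ∀ a ∈ P, ∀ w, a * y = d' * w → w ∈ P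
  · -- z = y/d' is integral over A, hence in A: contradiction with hyP'
    set K := FractionRing A
    have hinjK : Function.Injective (algebraMap A K) := IsFractionRing.injective A K
    have hd'K : algebraMap A K d' ≠ 0 := fun h0 => hd' (hinjK (by rwa [map_zero]))
    set z : K := algebraMap A K y / algebraMap A K d' with hz
    set NK : Submodule A K := Submodule.map (Algebra.linearMap A K) P with hNK
    have hNKne : NK ≠ ⊥ := by
      intro h0
      have : algebraMap A K d' ∈ NK := ⟨d', hd'P, rfl⟩
      rw [h0, Submodule.mem_bot] at this
      exact hd'K this
    have hNKfg : NK.FG := (IsNoetherian.noetherian P).map _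
    have hzint : IsIntegral A z := by
      refine isIntegral_of_smul_mem_submodule NK hNKne hNKfg z ?_
      rintro n ⟨a, haP, rfl⟩
      obtain ⟨w, hw⟩ := (hyP a).mp haP
      refine ⟨w, hcase a haP w hw, ?_⟩
      show algebraMap A K w = z • Algebra.linearMap A K a
      rw [smul_eq_mul, hz, div_mul_eq_mul_div, eq_div_iff hd'K]
      simp only [Algebra.linearMap_apply, ← map_mul]
      congr 1
      rw [mul_comm w d', ← hw, mul_comm a y]
    obtain ⟨u, hu⟩ := IsIntegrallyClosed.isIntegral_iff.mp hzint
    apply hyP'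
    refine ⟨u, hinjK ?_⟩
    have h2 : algebraMap A K y = algebraMap A K d' * algebraMap A K u := by
      rw [hu, hz, mul_comm]
      exact (div_mul_cancel₀ _ hd'K).symm
    exact h2.trans (map_mul _ _ _).symm
  · push_neg at hcase
    obtain ⟨a, haP, w, hw, hwP⟩ := hcase
    obtain ⟨q, hq⟩ := hsurj ⟨P, hPprime⟩
    have hqP : Ideal.comap f q.asIdeal = P := congrArg PrimeSpectrum.asIdeal hq
    have hfd' : f d' ≠ 0 := fun h0 => hd' (hinj (by rwa [map_zero]))
    have key : f w = f a * (f c * b) := by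
      apply mul_left_cancel₀ hfd'
      calc f d' * f w = f (a * y) := by rw [← map_mul, hw]
        _ = f a * (f c * f d) := by rw [hy, map_mul, map_mul]
        _ = f d' * (f a * (f c * b)) := by rw [hb]; ring
    have hfa : f a ∈ q.asIdeal := by rw [← hqP] at haP; exact haP
    have : w ∈ P := by
      rw [← hqP]
      show f w ∈ q.asIdeal
      rw [key]
      exact Ideal.mul_mem_right _ _ hfa
    exact hwP this
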